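/- Let Σ be a positive semidefinite d×d matrix with spectral decomposition Σ = Σᵢ λᵢ uᵢuᵢ^T (eigenvalues in decreasing order), let σ > 0, and set Σ̃ = Σ + σ²I. Then the minimizer over rank-at-most-k matrices L of ‖ΣΣ̃^{−1/2} − LΣ̃^{1/2}‖_F² is L* = Σ_{i=1}^k (λᵢ/(λᵢ + σ²)) uᵢuᵢ^T, assuming the values λᵢ/√(λᵢ+σ²) are strictly decreasing for i ≤ k. -/

import Mathlib

open Matrix

/-- Squared Frobenius norm of a real matrix. -/
noncomputable def frobSq {d : ℕ} (M : Matrix (Fin d) (Fin d) ℝ) : ℝ :=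
  ∑ i, ∑ j, (M i j) ^ 2

section Aux

variable {d r : ℕ}

lemma dotProduct_sum' (x : Fin d → ℝ) (f : Fin r → Fin d → ℝ) :
    x ⬝ᵥ (∑ m, f m) = ∑ m, x ⬝ᵥ f m := by
  simp only [dotProduct, Finset.sum_apply, Finset.mul_sum]
  exact Finset.sum_comm

lemma sum_dotProduct' (x : Fin d → ℝ) (f : Fin r → Fin d → ℝ) :
    (∑ m, f m) ⬝ᵥ x = ∑ m, f m ⬝ᵥ x := by
  simp only [dotProduct, Finset.sum_apply, Finset.sum_mul]
  exact Finset.sum_comm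

lemma vecMulVec_mulVec' (a b x : Fin d → ℝ) :
    vecMulVec a b *ᵥ x = (b ⬝ᵥ x) • a := by
  ext i
  simp [vecMulVec_apply, mulVec, dotProduct, Finset.mul_sum, mul_assoc, mul_comm, mul_left_comm]

lemma dot_self_nonneg (x : Fin d → ℝ) : 0 ≤ x ⬝ᵥ x :=
  Finset.sum_nonneg fun i _ => mul_self_nonneg _

lemma proj_expand (w : Fin r → Fin d → ℝ)
    (hw : ∀ m m', w m ⬝ᵥ w m' = if m = m' then (1:ℝ) else 0)
    (x : Fin d → ℝ) :
    (x - ∑ m, (w m ⬝ᵥ x) • w m) ⬝ᵥ (x - ∑ m, (w m ⬝ᵥ x) • w m)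
      = x ⬝ᵥ x - ∑ m, (w m ⬝ᵥ x)^2 := by
  have hxw : x ⬝ᵥ (∑ m, (w m ⬝ᵥ x) • w m) = ∑ m, (w m ⬝ᵥ x)^2 := by
    rw [dotProduct_sum']
    refine Finset.sum_congr rfl fun m _ => ?_
    rw [dotProduct_smul, smul_eq_mul, dotProduct_comm, sq]
  have hww : (∑ m, (w m ⬝ᵥ x) • w m) ⬝ᵥ (∑ m, (w m ⬝ᵥ x) • w m) = ∑ m, (w m ⬝ᵥ x)^2 := by
    rw [sum_dotProduct']
    refine Finset.sum_congr rfl fun m _ => ?_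
    rw [smul_dotProduct, dotProduct_sum', smul_eq_mul]
    have h : ∀ n, w m ⬝ᵥ ((w n ⬝ᵥ x) • w n) = if n = m then (w m ⬝ᵥ x) else 0 := by
      intro n
      rw [dotProduct_smul, smul_eq_mul, hw]
      by_cases h : m = n <;> simp [h, eq_comm]
    rw [Finset.sum_congr rfl fun n _ => h n, Finset.sum_ite_eq' Finset.univ m]
    simp [sq]
  have hwx : (∑ m, (w m ⬝ᵥ x) • w m) ⬝ᵥ x = ∑ m, (w m ⬝ᵥ x)^2 := by
    rw [dotProduct_comm]; exact hxw
  rw [sub_dotProduct, dotProduct_sub, dotProduct_sub, hxw, hww, hwx]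
  ring

lemma bessel_le (w : Fin r → Fin d → ℝ)
    (hw : ∀ m m', w m ⬝ᵥ w m' = if m = m' then (1:ℝ) else 0)
    (x : Fin d → ℝ) : ∑ m, (w m ⬝ᵥ x)^2 ≤ x ⬝ᵥ x := by
  have h := proj_expand w hw x
  have h2 := dot_self_nonneg (x - ∑ m, (w m ⬝ᵥ x) • w m)
  linarith [h ▸ h2]

lemma col_ineq (w : Fin r → Fin d → ℝ)
    (hw : ∀ m m', w m ⬝ᵥ w m' = if m = m' then (1:ℝ) else 0)
    (y c : Fin d → ℝ) (hc : c = ∑ m, (w m ⬝ᵥ c) • w m) :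
    y ⬝ᵥ y - ∑ m, (w m ⬝ᵥ y)^2 ≤ (y - c) ⬝ᵥ (y - c) := by
  set x := y - c with hx
  have key : x - ∑ m, (w m ⬝ᵥ x) • w m = y - ∑ m, (w m ⬝ᵥ y) • w m := by
    have h : ∑ m, (w m ⬝ᵥ x) • w m = (∑ m, (w m ⬝ᵥ y) • w m) - c := by
      rw [hx]
      conv_rhs => rw [hc]
      rw [← Finset.sum_sub_distrib]
      refine Finset.sum_congr rfl fun m _ => ?_
      rw [dotProduct_sub, sub_smul]
    rw [h, hx]
    abel
  have h1 := proj_expand w hw x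
  have h2 := proj_expand w hw y
  rw [key, h2] at h1
  have h3 : (0:ℝ) ≤ ∑ m, (w m ⬝ᵥ x)^2 := Finset.sum_nonneg fun m _ => sq_nonneg _
  linarith

lemma parseval (u : Fin d → Fin d → ℝ)
    (hUU : ∀ i j, (∑ l, u l i * u l j) = if i = j then (1:ℝ) else 0)
    (x : Fin d → ℝ) : ∑ l, (x ⬝ᵥ u l)^2 = x ⬝ᵥ x := by
  have h : ∀ l, (x ⬝ᵥ u l)^2 = ∑ i, ∑ j, x i * x j * (u l i * u l j) := by
    intro l
    rw [sq, dotProduct, Finset.sum_mul_sum]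
    refine Finset.sum_congr rfl fun i _ => Finset.sum_congr rfl fun j _ => by ring
  rw [Finset.sum_congr rfl fun l _ => h l, Finset.sum_comm]
  refine Finset.sum_congr rfl fun i _ => ?_
  rw [Finset.sum_comm]
  have h2 : ∀ j, (∑ l, x i * x j * (u l i * u l j)) = x i * x j * (if i = j then (1:ℝ) else 0) := by
    intro j
    rw [← Finset.mul_sum, hUU]
  rw [Finset.sum_congr rfl fun j _ => h2 j]
  simp [dotProduct]

lemma basis_extract {k : ℕ} (B : Matrix (Fin d) (Fin d) ℝ) (hB : B.rank ≤ k) :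
    ∃ (r : ℕ) (w : Fin r → Fin d → ℝ), r ≤ k ∧
      (∀ m m', w m ⬝ᵥ w m' = if m = m' then (1:ℝ) else 0) ∧
      (∀ x : Fin d → ℝ, B *ᵥ x = ∑ m, ((w m) ⬝ᵥ (B *ᵥ x)) • w m) := by
  classical
  set e : (Fin d → ℝ) ≃ₗ[ℝ] EuclideanSpace ℝ (Fin d) :=
    (WithLp.linearEquiv 2 ℝ (Fin d → ℝ)).symm with he
  set V : Submodule ℝ (EuclideanSpace ℝ (Fin d)) :=
    (LinearMap.range B.mulVecLin).map (e : (Fin d → ℝ) →ₗ[ℝ] _) with hV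
  have hfr : Module.finrank ℝ V = B.rank := by
    rw [hV, LinearEquiv.finrank_map_eq]; rfl
  have hinner : ∀ x y : EuclideanSpace ℝ (Fin d),
      (inner ℝ x y : ℝ) = (e.symm x) ⬝ᵥ (e.symm y) := by
    intro x y
    simp [PiLp.inner_apply, RCLike.inner_apply, dotProduct, he, mul_comm]
  let b := stdOrthonormalBasis ℝ V
  refine ⟨Module.finrank ℝ V, fun m => e.symm ((b m : V) : EuclideanSpace ℝ (Fin d)),
    hfr ▸ hB, ?_, ?_⟩
  · intro m m'
    have hb := b.orthonormal
    rw [orthonormal_iff_ite] at hb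
    have h := hb m m'
    rw [Submodule.coe_inner] at h
    rw [← hinner]
    exact h
  · intro x
    have hc : e (B *ᵥ x) ∈ V := ⟨B *ᵥ x, ⟨x, rfl⟩, rfl⟩
    set v : V := ⟨e (B *ᵥ x), hc⟩ with hv
    have hrep := b.sum_repr' v
    have hcoe : ((∑ m, (inner ℝ (b m) v : ℝ) • b m : V) : EuclideanSpace ℝ (Fin d))
        = e (B *ᵥ x) := by rw [hrep]
    push_cast [Submodule.coe_smul] at hcoe
    have key := congrArg e.symm hcoe
    rw [map_sum] at key
    simp only [_root_.map_smul, LinearEquiv.symm_apply_apply] at key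
    calc B *ᵥ x = ∑ m, (inner ℝ (b m) v : ℝ) • e.symm ((b m : V) : EuclideanSpace ℝ (Fin d)) :=
          key.symm
    _ = ∑ m, ((e.symm ((b m : V) : EuclideanSpace ℝ (Fin d))) ⬝ᵥ (B *ᵥ x)) •
          e.symm ((b m : V) : EuclideanSpace ℝ (Fin d)) := by
        refine Finset.sum_congr rfl fun m _ => ?_
        have hco : (inner ℝ (b m) v : ℝ)
            = (e.symm ((b m : V) : EuclideanSpace ℝ (Fin d))) ⬝ᵥ (B *ᵥ x) := by
          rw [Submodule.coe_inner, hinner, hv]; simp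
        rw [hco]

lemma frobSq_eq_trace (M : Matrix (Fin d) (Fin d) ℝ) : frobSq M = Matrix.trace (M * Mᵀ) := by
  simp [frobSq, Matrix.trace, Matrix.diag, mul_apply, sq]

lemma frobSq_mul_orth (M U : Matrix (Fin d) (Fin d) ℝ) (hU : Uᵀ * U = 1) :
    frobSq (M * Uᵀ) = frobSq M := by
  rw [frobSq_eq_trace, frobSq_eq_trace, transpose_mul, transpose_transpose,
      Matrix.mul_assoc, ← Matrix.mul_assoc Uᵀ U Mᵀ, hU, Matrix.one_mul]

lemma frobSq_eq_sum_mulVec (u : Fin d → Fin d → ℝ)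
    (hU : (Matrix.of u)ᵀ * (Matrix.of u) = 1)
    (M : Matrix (Fin d) (Fin d) ℝ) :
    frobSq M = ∑ l, (M *ᵥ u l) ⬝ᵥ (M *ᵥ u l) := by
  rw [← frobSq_mul_orth M (Matrix.of u) hU, frobSq]
  rw [Finset.sum_comm]
  refine Finset.sum_congr rfl fun l _ => ?_
  simp [dotProduct, mul_apply, mulVec, sq]

lemma comb_lemma {k : ℕ} (ν t : Fin d → ℝ) (hν0 : ∀ i, 0 ≤ ν i)
    (hνdec : ∀ i j : Fin d, i ≤ j → ν j ≤ ν i)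
    (ht0 : ∀ l, 0 ≤ t l) (ht1 : ∀ l, t l ≤ 1) (hts : ∑ l, t l ≤ (k:ℝ)) :
    ∑ l, ν l * t l ≤ ∑ l ∈ Finset.univ.filter (fun l : Fin d => (l:ℕ) < k), ν l := by
  by_cases hk : d ≤ k
  · have hf : Finset.univ.filter (fun l : Fin d => (l:ℕ) < k) = Finset.univ := by
      ext l; simp [lt_of_lt_of_le l.isLt hk]
    rw [hf]
    exact Finset.sum_le_sum fun l _ => by nlinarith [hν0 l, ht1 l, ht0 l]
  · push_neg at hk
    set c := ν ⟨k, hk⟩ with hc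
    have hc0 : 0 ≤ c := hν0 _
    have hcard : (Finset.univ.filter (fun l : Fin d => (l:ℕ) < k)).card = k := by
      have he : (Finset.univ.filter (fun l : Fin d => (l:ℕ) < k)) =
          (Finset.range k).attachFin
            (fun m hm => lt_trans (Finset.mem_range.mp hm) hk) := by
        ext l; simp
      rw [he, Finset.card_attachFin, Finset.card_range]
    have key : ∀ l : Fin d, ν l * t l ≤
        (if (l:ℕ) < k then ν l + c * (t l - 1) else c * t l) := by
      intro l
      by_cases h : (l:ℕ) < k
      · simp only [h, if_true]
        have hνl : c ≤ ν l := hνdec l ⟨k, hk⟩ (by rw [Fin.le_def]; simpa using h.le)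
        nlinarith [ht1 l]
      · simp only [h, if_false]
        have hνl : ν l ≤ c := hνdec ⟨k, hk⟩ l (by rw [Fin.le_def]; simpa using not_lt.mp h)
        nlinarith [ht0 l]
    have h3 : (∑ l ∈ Finset.univ.filter (fun l : Fin d => (l:ℕ) < k), t l)
        + (∑ l ∈ Finset.univ.filter (fun l : Fin d => ¬ (l:ℕ) < k), t l) = ∑ l, t l :=
      Finset.sum_filter_add_sum_filter_not _ _ _
    calc ∑ l, ν l * t l
        ≤ ∑ l : Fin d, (if (l:ℕ) < k then ν l + c * (t l - 1) else c * t l) :=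
          Finset.sum_le_sum fun l _ => key l
      _ = (∑ l ∈ Finset.univ.filter (fun l : Fin d => (l:ℕ) < k), ν l)
            + c * ((∑ l, t l) - k) := by
          rw [Finset.sum_ite, Finset.sum_add_distrib, ← Finset.mul_sum,
            Finset.sum_sub_distrib, ← Finset.mul_sum]
          simp only [Finset.sum_const, nsmul_eq_mul, mul_one, hcard]
          linear_combination c * h3
      _ ≤ ∑ l ∈ Finset.univ.filter (fun l : Fin d => (l:ℕ) < k), ν l := by
          nlinarith [hc0, hts]

lemma sum_smul_vecMulVec_mulVec (u : Fin d → Fin d → ℝ)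
    (F : Finset (Fin d)) (c : Fin d → ℝ) (x : Fin d → ℝ) :
    (∑ i ∈ F, c i • vecMulVec (u i) (u i)) *ᵥ x = ∑ i ∈ F, (c i * (u i ⬝ᵥ x)) • u i := by
  induction F using Finset.induction with
  | empty => simp [Matrix.zero_mulVec]
  | insert _ _ hnotmem ih =>
      rw [Finset.sum_insert hnotmem, Finset.sum_insert hnotmem, Matrix.add_mulVec, ih,
        smul_mulVec, vecMulVec_mulVec', smul_smul]

lemma eig_sum_mulVec (u : Fin d → Fin d → ℝ)
    (hortho : ∀ i j, u i ⬝ᵥ u j = if i = j then (1:ℝ) else 0)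
    (F : Finset (Fin d)) (c : Fin d → ℝ) (l : Fin d) :
    (∑ i ∈ F, c i • vecMulVec (u i) (u i)) *ᵥ u l
      = if l ∈ F then c l • u l else 0 := by
  rw [sum_smul_vecMulVec_mulVec]
  have h : ∀ i, (c i * (u i ⬝ᵥ u l)) • u i = if i = l then c i • u i else 0 := by
    intro i
    rw [hortho]
    by_cases h : i = l <;> simp [h]
  rw [Finset.sum_congr rfl fun i _ => h i, Finset.sum_ite_eq' F l (fun i => c i • u i)]

end Aux

/-- with `Σ = Σᵢ λᵢ uᵢuᵢᵀ` PSD (eigenvalues decreasing), `σ > 0`,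
`Σ̃ = Σ + σ²I`, the minimizer over rank-≤k matrices `L` of `‖ΣΣ̃^{−1/2} − LΣ̃^{1/2}‖_F²`
is `L* = Σ_{i<k} (λᵢ/(λᵢ+σ²)) uᵢuᵢᵀ`, assuming the singular values `λᵢ/√(λᵢ+σ²)` are
strictly decreasing for the leading `k` indices. -/
theorem rank_k_frobenius_minimizer
    (d k : ℕ) (σ : ℝ) (hσ : 0 < σ)
    (lam : Fin d → ℝ) (u : Fin d → Fin d → ℝ)
    (hortho : ∀ i j, u i ⬝ᵥ u j = if i = j then (1:ℝ) else 0)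
    (hpos : ∀ i, 0 ≤ lam i)
    (hdec : ∀ i j : Fin d, i ≤ j → lam j ≤ lam i)
    (hstrict : ∀ i j : Fin d, i < j → (j : ℕ) ≤ k →
        lam j / Real.sqrt (lam j + σ ^ 2) < lam i / Real.sqrt (lam i + σ ^ 2))
    (S Shalf Sneghalf Lstar : Matrix (Fin d) (Fin d) ℝ)
    (hS : S = ∑ i, lam i • vecMulVec (u i) (u i))
    (hShalf : Shalf = ∑ i, Real.sqrt (lam i + σ ^ 2) • vecMulVec (u i) (u i))
    (hSneghalf : Sneghalf = ∑ i, (Real.sqrt (lam i + σ ^ 2))⁻¹ • vecMulVec (u i) (u i))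
    (hLstar : Lstar = ∑ i ∈ Finset.univ.filter (fun i : Fin d => (i : ℕ) < k),
        (lam i / (lam i + σ ^ 2)) • vecMulVec (u i) (u i)) :
    Lstar.rank ≤ k ∧
      ∀ L : Matrix (Fin d) (Fin d) ℝ, L.rank ≤ k →
        frobSq (S * Sneghalf - Lstar * Shalf) ≤ frobSq (S * Sneghalf - L * Shalf) := by
  classical
  have hsq : ∀ i, 0 < lam i + σ^2 := fun i => add_pos_of_nonneg_of_pos (hpos i) (pow_pos hσ 2)
  have hsqrt : ∀ i, 0 < Real.sqrt (lam i + σ^2) := fun i => Real.sqrt_pos.mpr (hsq i)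
  obtain ⟨μ, hμdef⟩ : ∃ μ : Fin d → ℝ, μ = fun i => lam i / Real.sqrt (lam i + σ^2) := ⟨_, rfl⟩
  obtain ⟨ν, hνdef⟩ : ∃ ν : Fin d → ℝ, ν = fun i => lam i ^ 2 / (lam i + σ^2) := ⟨_, rfl⟩
  have hμ : ∀ i, μ i = lam i / Real.sqrt (lam i + σ^2) := fun i => by rw [hμdef]
  have hν : ∀ i, ν i = lam i ^ 2 / (lam i + σ^2) := fun i => by rw [hνdef]
  have hμν : ∀ i, μ i ^ 2 = ν i := by
    intro i
    rw [hμ, hν, div_pow, Real.sq_sqrt (hsq i).le]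
  have hν0 : ∀ i, 0 ≤ ν i := fun i => by rw [hν]; exact div_nonneg (sq_nonneg _) (hsq i).le
  have hνdec : ∀ i j : Fin d, i ≤ j → ν j ≤ ν i := by
    intro i j hij
    have hl := hdec i j hij
    rw [hν, hν, div_le_div_iff₀ (hsq j) (hsq i)]
    nlinarith [mul_nonneg (mul_nonneg (hpos i) (hpos j)) (sub_nonneg.mpr hl),
      mul_nonneg (mul_nonneg (pow_pos hσ 2).le (add_nonneg (hpos i) (hpos j)))
        (sub_nonneg.mpr hl)]
  have hUU : (Matrix.of u)ᵀ * (Matrix.of u) = 1 := by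
    rw [mul_eq_one_comm]
    ext i j
    simpa [Matrix.mul_apply, Matrix.one_apply, dotProduct] using hortho i j
  have hUU' : ∀ i j, (∑ l, u l i * u l j) = if i = j then (1:ℝ) else 0 := by
    intro i j
    have h := congrFun (congrFun hUU i) j
    simpa [Matrix.mul_apply, Matrix.one_apply] using h
  have hu1 : ∀ l, u l ⬝ᵥ u l = 1 := fun l => by simpa using hortho l l
  have hA : ∀ l, (S * Sneghalf) *ᵥ u l = μ l • u l := by
    intro l
    rw [← Matrix.mulVec_mulVec, hSneghalf,
      eig_sum_mulVec u hortho Finset.univ (fun i => (Real.sqrt (lam i + σ^2))⁻¹) l]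
    simp only [Finset.mem_univ, if_true]
    rw [Matrix.mulVec_smul, hS, eig_sum_mulVec u hortho Finset.univ lam l]
    simp only [Finset.mem_univ, if_true, smul_smul]
    congr 1
    rw [hμ, div_eq_mul_inv, mul_comm]
  have hLs : ∀ l, (Lstar * Shalf) *ᵥ u l = (if (l:ℕ) < k then μ l else 0) • u l := by
    intro l
    rw [← Matrix.mulVec_mulVec, hShalf,
      eig_sum_mulVec u hortho Finset.univ (fun i => Real.sqrt (lam i + σ^2)) l]
    simp only [Finset.mem_univ, if_true]
    rw [Matrix.mulVec_smul, hLstar,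
      eig_sum_mulVec u hortho _ (fun i => lam i / (lam i + σ^2)) l]
    by_cases h : (l:ℕ) < k
    · simp only [Finset.mem_filter, Finset.mem_univ, true_and, h, if_true, smul_smul]
      congr 1
      rw [hμ]
      have hs2 := Real.sq_sqrt (hsq l).le
      have hne : Real.sqrt (lam l + σ^2) ≠ 0 := (hsqrt l).ne'
      have hne2 : lam l + σ^2 ≠ 0 := (hsq l).ne'
      field_simp
      linear_combination lam l * hs2
    · simp [Finset.mem_filter, h]
  have hdot : ∀ (a : ℝ) (z : Fin d → ℝ), (a • z) ⬝ᵥ (a • z) = a^2 * (z ⬝ᵥ z) := by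
    intro a z
    rw [smul_dotProduct, dotProduct_smul, smul_eq_mul, smul_eq_mul, sq]
    ring
  constructor
  · -- rank bound
    have hsub : LinearMap.range Lstar.mulVecLin ≤
        Submodule.span ℝ
          (((Finset.univ.filter (fun i : Fin d => (i:ℕ) < k)).image u : Finset (Fin d → ℝ)) :
            Set (Fin d → ℝ)) := by
      rintro y ⟨x, rfl⟩
      rw [Matrix.mulVecLin_apply, hLstar, sum_smul_vecMulVec_mulVec]
      refine Submodule.sum_mem _ fun i hi => Submodule.smul_mem _ _ (Submodule.subset_span ?_)
      simp only [Finset.coe_image, Set.mem_image, Finset.mem_coe]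
      exact ⟨i, hi, rfl⟩
    have h1 : Lstar.rank ≤ Module.finrank ℝ (Submodule.span ℝ
        (((Finset.univ.filter (fun i : Fin d => (i:ℕ) < k)).image u : Finset (Fin d → ℝ)) :
          Set (Fin d → ℝ))) := Submodule.finrank_mono hsub
    have h2 := finrank_span_finset_le_card
      (R := ℝ) ((Finset.univ.filter (fun i : Fin d => (i:ℕ) < k)).image u)
    rw [Set.finrank] at h2
    have h3 : ((Finset.univ.filter (fun i : Fin d => (i:ℕ) < k)).image u).card ≤ k := by
      have hinj : (Finset.univ.filter (fun i : Fin d => (i:ℕ) < k)).card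
          ≤ (Finset.range k).card :=
        Finset.card_le_card_of_injOn (fun i => (i:ℕ))
          (fun a ha => by
            simp only [Finset.coe_filter, Finset.mem_coe, Set.mem_setOf_eq, Finset.mem_filter, Finset.mem_univ, true_and] at ha
            simpa [Finset.mem_range] using ha)
          (fun a _ b _ hab => Fin.ext hab)
      exact le_trans Finset.card_image_le (by simpa [Finset.card_range] using hinj)
    exact le_trans (le_trans h1 h2) h3
  · intro L hL
    -- value at the minimizer
    have hMstar : ∀ l, (S * Sneghalf - Lstar * Shalf) *ᵥ u l
        = (if (l:ℕ) < k then 0 else μ l) • u l := by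
      intro l
      rw [Matrix.sub_mulVec, hA l, hLs l]
      by_cases h : (l:ℕ) < k <;> simp [h]
    have hLHS : frobSq (S * Sneghalf - Lstar * Shalf)
        = ∑ l ∈ Finset.univ.filter (fun l : Fin d => ¬ (l:ℕ) < k), ν l := by
      rw [frobSq_eq_sum_mulVec u hUU, Finset.sum_filter]
      refine Finset.sum_congr rfl fun l _ => ?_
      rw [hMstar l, hdot, hu1 l, mul_one]
      by_cases h : (l:ℕ) < k <;> simp [h, hμν l]
    -- lower bound for arbitrary L
    have hrank : (L * Shalf).rank ≤ k := le_trans (Matrix.rank_mul_le_left L Shalf) hL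
    obtain ⟨r, w, hrk, hw, hrep⟩ := basis_extract (L * Shalf) hrank
    obtain ⟨t, htdef⟩ : ∃ t : Fin d → ℝ, t = fun l => ∑ m, (w m ⬝ᵥ u l)^2 := ⟨_, rfl⟩
    have ht : ∀ l, t l = ∑ m, (w m ⬝ᵥ u l)^2 := fun l => by rw [htdef]
    have ht0 : ∀ l, 0 ≤ t l := fun l => by
      rw [ht]; exact Finset.sum_nonneg fun m _ => sq_nonneg _
    have ht1 : ∀ l, t l ≤ 1 := fun l => by
      have h := bessel_le w hw (u l)
      rw [hu1 l] at h
      rw [ht]; exact h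
    have hts : ∑ l, t l ≤ (k:ℝ) := by
      have hswap : ∑ l, t l = ∑ m, ∑ l, (w m ⬝ᵥ u l)^2 := by
        rw [Finset.sum_congr rfl fun l _ => ht l]
        exact Finset.sum_comm
      rw [hswap, Finset.sum_congr rfl fun m _ => parseval u hUU' (w m),
        Finset.sum_congr rfl fun m _ => by simpa using hw m m]
      simp only [Finset.sum_const, Finset.card_univ, Fintype.card_fin, nsmul_eq_mul, mul_one]
      exact_mod_cast hrk
    have hcol : ∀ l, ν l - ν l * t l ≤
        ((S * Sneghalf - L * Shalf) *ᵥ u l) ⬝ᵥ ((S * Sneghalf - L * Shalf) *ᵥ u l) := by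
      intro l
      have hcl : (S * Sneghalf - L * Shalf) *ᵥ u l = μ l • u l - (L * Shalf) *ᵥ u l := by
        rw [Matrix.sub_mulVec, hA l]
      have hcrep : (L * Shalf) *ᵥ u l = ∑ m, (w m ⬝ᵥ ((L * Shalf) *ᵥ u l)) • w m := hrep (u l)
      have hineq := col_ineq w hw (μ l • u l) ((L * Shalf) *ᵥ u l) hcrep
      have hyy : (μ l • u l) ⬝ᵥ (μ l • u l) = ν l := by
        rw [hdot, hu1 l, mul_one, hμν l]
      have hwy : ∑ m, (w m ⬝ᵥ (μ l • u l))^2 = ν l * t l := by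
        have h : ∀ m, (w m ⬝ᵥ (μ l • u l))^2 = μ l ^2 * (w m ⬝ᵥ u l)^2 := by
          intro m
          rw [dotProduct_smul, smul_eq_mul, mul_pow]
        rw [Finset.sum_congr rfl fun m _ => h m, ← Finset.mul_sum, hμν l, ht]
      calc ν l - ν l * t l
          = (μ l • u l) ⬝ᵥ (μ l • u l) - ∑ m, (w m ⬝ᵥ (μ l • u l))^2 := by rw [hyy, hwy]
        _ ≤ (μ l • u l - (L * Shalf) *ᵥ u l) ⬝ᵥ (μ l • u l - (L * Shalf) *ᵥ u l) := hineq
        _ = ((S * Sneghalf - L * Shalf) *ᵥ u l) ⬝ᵥ ((S * Sneghalf - L * Shalf) *ᵥ u l) := by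
            rw [hcl]
    have hsum1 : ∑ l, (ν l - ν l * t l) ≤
        ∑ l, ((S * Sneghalf - L * Shalf) *ᵥ u l) ⬝ᵥ ((S * Sneghalf - L * Shalf) *ᵥ u l) :=
      Finset.sum_le_sum fun l _ => hcol l
    have hcomb := comb_lemma ν t hν0 hνdec ht0 ht1 hts
    have hsplit : (∑ l ∈ Finset.univ.filter (fun l : Fin d => (l:ℕ) < k), ν l)
        + (∑ l ∈ Finset.univ.filter (fun l : Fin d => ¬ (l:ℕ) < k), ν l) = ∑ l, ν l :=
      Finset.sum_filter_add_sum_filter_not _ _ _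
    have hsub2 : ∑ l ∈ Finset.univ.filter (fun l : Fin d => ¬ (l:ℕ) < k), ν l
        ≤ ∑ l, (ν l - ν l * t l) := by
      rw [Finset.sum_sub_distrib]
      linarith
    rw [hLHS, frobSq_eq_sum_mulVec u hUU (S * Sneghalf - L * Shalf)]
    linarith
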